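/- For all λ' ∈ ℤ³_+ and λ'' ∈ ℤ²_+ one has I(r(λ',λ'')) = 0. Consequently the functional I vanishes on the ℤ-span of all restriction elements r(λ',λ''), i.e. on the image Res(K⁰(K)) of the restriction map for G = SU(3,2) ≅ SU(2,3). -/

import Mathlib

open scoped Classical

/-- `ℤ²_+`: weakly decreasing integer pairs. -/
abbrev ZP2 : Type := {v : ℤ × ℤ // v.2 ≤ v.1}

/-- The free `ℤ`-module `F = K⁰(K_M)` on the basis `ℤ²_+ × ℤ × ℤ` for
`G = SU(3,2)`. -/
abbrev FSU32 : Type := (ZP2 × ℤ × ℤ) →₀ ℤ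

/-- The restriction element
`r(λ',λ'') = Σ_{μ'⊆λ'} Σ_{λ''_1 ≥ μ'' ≥ λ''_2} e_{(μ', μ'', |λ'|+|λ''|−|μ'|−μ'')}`
for `λ' = (a,b,c) ∈ ℤ³_+` and `λ'' = (d,e) ∈ ℤ²_+`. -/
noncomputable def rSU32 (a b c d e : ℤ) : FSU32 :=
  ∑ x ∈ Finset.Icc b a, ∑ y ∈ Finset.Icc c b, ∑ z ∈ Finset.Icc e d,
    if h : y ≤ x then
      Finsupp.single ((⟨(x, y), h⟩ : ZP2), z, (a + b + c + d + e) - x - y - z) 1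
    else 0

/-- The `ℤ`-linear functional `I` on `F`, given on basis elements by
`I(e_{(μ',μ'',p)}) = (μ'_1+μ''−p) + (μ'_2+μ''−p) + (μ'_1+μ''−p)² − (μ'_2+μ''−p)²`. -/
noncomputable def Ifun (v : FSU32) : ℤ :=
  v.sum fun w n => n *
    ((w.1.1.1 + w.2.1 - w.2.2) + (w.1.1.2 + w.2.1 - w.2.2)
      + (w.1.1.1 + w.2.1 - w.2.2) ^ 2 - (w.1.1.2 + w.2.1 - w.2.2) ^ 2)

/-- The weight function on basis elements. -/
def gw : (ZP2 × ℤ × ℤ) → ℤ := fun w =>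
  (w.1.1.1 + w.2.1 - w.2.2) + (w.1.1.2 + w.2.1 - w.2.2)
    + (w.1.1.1 + w.2.1 - w.2.2) ^ 2 - (w.1.1.2 + w.2.1 - w.2.2) ^ 2

/-- `Ifun` as a linear map. -/
noncomputable def ILin : FSU32 →ₗ[ℤ] ℤ := Finsupp.linearCombination ℤ gw

lemma Ifun_eq (v : FSU32) : Ifun v = ILin v := by
  simp only [Ifun, ILin, Finsupp.linearCombination_apply, Finsupp.sum, smul_eq_mul, gw]

lemma Icc_succ_top (m n : ℤ) (h : m ≤ n + 1) :
    Finset.Icc m (n + 1) = insert (n + 1) (Finset.Icc m n) := by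
  ext t; simp only [Finset.mem_Icc, Finset.mem_insert]; omega

/-- Closed form (times 6) for the sum of a quadratic over `Icc`. -/
lemma sumIcc_poly (A B C m n : ℤ) (h : m ≤ n) :
    (∑ x ∈ Finset.Icc m n, (A + B * x + C * x ^ 2)) * 6 =
      6 * A * (n - m + 1) + 3 * B * (n + m) * (n - m + 1)
        + C * (n * (n + 1) * (2 * n + 1) - (m - 1) * m * (2 * m - 1)) := by
  refine Int.le_induction (motive := fun n _ =>
      (∑ x ∈ Finset.Icc m n, (A + B * x + C * x ^ 2)) * 6 =
        6 * A * (n - m + 1) + 3 * B * (n + m) * (n - m + 1)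
          + C * (n * (n + 1) * (2 * n + 1) - (m - 1) * m * (2 * m - 1))) ?_ ?_ n h
  · simp only [Finset.Icc_self, Finset.sum_singleton]; ring
  · intro n hn ih
    rw [Icc_succ_top m n (by omega), Finset.sum_insert (by simp), add_mul, ih]
    ring

theorem invariant_vanishes_on_image :
    (∀ a b c d e : ℤ, b ≤ a → c ≤ b → e ≤ d → Ifun (rSU32 a b c d e) = 0) ∧
      ∀ x ∈ Submodule.span ℤ
        {x : FSU32 | ∃ a b c d e : ℤ, b ≤ a ∧ c ≤ b ∧ e ≤ d ∧ x = rSU32 a b c d e},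
        Ifun x = 0 := by
  have key : ∀ a b c d e : ℤ, b ≤ a → c ≤ b → e ≤ d → Ifun (rSU32 a b c d e) = 0 := by
    intro a b c d e hba hcb hed
    set S : ℤ := a + b + c + d + e with hS
    -- express `Ifun (rSU32 …)` as an explicit triple sum
    have h1 : Ifun (rSU32 a b c d e) =
        ∑ x ∈ Finset.Icc b a, ∑ y ∈ Finset.Icc c b, ∑ z ∈ Finset.Icc e d,
          ((x + z - (S - x - y - z)) + (y + z - (S - x - y - z))
            + (x + z - (S - x - y - z)) ^ 2 - (y + z - (S - x - y - z)) ^ 2) := by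
      rw [Ifun_eq, rSU32, map_sum]
      refine Finset.sum_congr rfl fun x hx => ?_
      rw [map_sum]
      refine Finset.sum_congr rfl fun y hy => ?_
      rw [map_sum]
      refine Finset.sum_congr rfl fun z hz => ?_
      have hyx : y ≤ x :=
        le_trans (Finset.mem_Icc.mp hy).2 (Finset.mem_Icc.mp hx).1
      rw [dif_pos hyx]
      simp only [ILin, Finsupp.linearCombination_single, one_smul, gw, hS]
    rw [h1]
    set N : ℤ := d - e + 1 with hN
    set K : ℤ := b - c + 1 with hK
    set Qy : ℤ := b * (b + 1) * (2 * b + 1) - (c - 1) * c * (2 * c - 1) with hQy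
    -- inner z-sum
    have hz : ∀ x y : ℤ, (∑ z ∈ Finset.Icc e d,
        ((x + z - (S - x - y - z)) + (y + z - (S - x - y - z))
          + (x + z - (S - x - y - z)) ^ 2 - (y + z - (S - x - y - z)) ^ 2)) * 6 =
        6 * ((1 + x - y) * (3 * x + 3 * y - 2 * S)) * N
          + 3 * (4 + 4 * (x - y)) * (d + e) * N := by
      intro x y
      have h6 := sumIcc_poly ((1 + x - y) * (3 * x + 3 * y - 2 * S))
        (4 + 4 * (x - y)) 0 e d hed
      rw [Finset.sum_congr rfl (fun z _ => show
          (x + z - (S - x - y - z)) + (y + z - (S - x - y - z))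
            + (x + z - (S - x - y - z)) ^ 2 - (y + z - (S - x - y - z)) ^ 2 =
          (1 + x - y) * (3 * x + 3 * y - 2 * S) + (4 + 4 * (x - y)) * z + 0 * z ^ 2
          from by ring), h6, hN]
      ring
    -- middle y-sum
    have hy : ∀ x : ℤ, (∑ y ∈ Finset.Icc c b,
        (6 * ((1 + x - y) * (3 * x + 3 * y - 2 * S)) * N
          + 3 * (4 + 4 * (x - y)) * (d + e) * N)) * 6 =
        6 * (6 * N * (3 * x ^ 2 + 3 * x - 2 * S - 2 * S * x) + 12 * N * (d + e)
            + 12 * N * (d + e) * x) * K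
          + 3 * (6 * N * (3 + 2 * S) - 12 * N * (d + e)) * (b + c) * K
          + (-18 * N) * Qy := by
      intro x
      have h6 := sumIcc_poly
        (6 * N * (3 * x ^ 2 + 3 * x - 2 * S - 2 * S * x) + 12 * N * (d + e)
          + 12 * N * (d + e) * x)
        (6 * N * (3 + 2 * S) - 12 * N * (d + e)) (-18 * N) c b hcb
      rw [Finset.sum_congr rfl (fun y _ => show
          6 * ((1 + x - y) * (3 * x + 3 * y - 2 * S)) * N
            + 3 * (4 + 4 * (x - y)) * (d + e) * N =
          (6 * N * (3 * x ^ 2 + 3 * x - 2 * S - 2 * S * x) + 12 * N * (d + e)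
            + 12 * N * (d + e) * x)
          + (6 * N * (3 + 2 * S) - 12 * N * (d + e)) * y + (-18 * N) * y ^ 2
          from by ring), h6, hK, hQy]
    -- outer x-sum
    have hx := sumIcc_poly
      (6 * K * (-12 * N * S + 12 * N * (d + e))
        + 3 * (b + c) * K * (6 * N * (3 + 2 * S) - 12 * N * (d + e))
        + (-18 * N) * Qy)
      (6 * K * (18 * N - 12 * N * S + 12 * N * (d + e))) (108 * K * N) b a hba
    have h216 : (∑ x ∈ Finset.Icc b a, ∑ y ∈ Finset.Icc c b, ∑ z ∈ Finset.Icc e d,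
        ((x + z - (S - x - y - z)) + (y + z - (S - x - y - z))
          + (x + z - (S - x - y - z)) ^ 2 - (y + z - (S - x - y - z)) ^ 2)) * 216 = 0 := by
      have hper : ∀ x : ℤ, (∑ y ∈ Finset.Icc c b, ∑ z ∈ Finset.Icc e d,
          ((x + z - (S - x - y - z)) + (y + z - (S - x - y - z))
            + (x + z - (S - x - y - z)) ^ 2 - (y + z - (S - x - y - z)) ^ 2)) * 216 =
          (6 * (6 * N * (3 * x ^ 2 + 3 * x - 2 * S - 2 * S * x) + 12 * N * (d + e)
              + 12 * N * (d + e) * x) * K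
            + 3 * (6 * N * (3 + 2 * S) - 12 * N * (d + e)) * (b + c) * K
            + (-18 * N) * Qy) * 6 := by
        intro x
        calc (∑ y ∈ Finset.Icc c b, ∑ z ∈ Finset.Icc e d,
            ((x + z - (S - x - y - z)) + (y + z - (S - x - y - z))
              + (x + z - (S - x - y - z)) ^ 2 - (y + z - (S - x - y - z)) ^ 2)) * 216
            = ∑ y ∈ Finset.Icc c b, ((∑ z ∈ Finset.Icc e d,
                ((x + z - (S - x - y - z)) + (y + z - (S - x - y - z))
                  + (x + z - (S - x - y - z)) ^ 2 - (y + z - (S - x - y - z)) ^ 2)) * 6)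
                * 36 := by
              rw [Finset.sum_mul]
              exact Finset.sum_congr rfl fun y _ => by ring
          _ = ∑ y ∈ Finset.Icc c b,
                (6 * ((1 + x - y) * (3 * x + 3 * y - 2 * S)) * N
                  + 3 * (4 + 4 * (x - y)) * (d + e) * N) * 36 :=
              Finset.sum_congr rfl fun y _ => by rw [hz x y]
          _ = ((∑ y ∈ Finset.Icc c b,
                (6 * ((1 + x - y) * (3 * x + 3 * y - 2 * S)) * N
                  + 3 * (4 + 4 * (x - y)) * (d + e) * N)) * 6) * 6 := by
              rw [← Finset.sum_mul]; ring
          _ = _ := by rw [hy x]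
      calc (∑ x ∈ Finset.Icc b a, ∑ y ∈ Finset.Icc c b, ∑ z ∈ Finset.Icc e d,
          ((x + z - (S - x - y - z)) + (y + z - (S - x - y - z))
            + (x + z - (S - x - y - z)) ^ 2 - (y + z - (S - x - y - z)) ^ 2)) * 216
          = ∑ x ∈ Finset.Icc b a, ((∑ y ∈ Finset.Icc c b, ∑ z ∈ Finset.Icc e d,
              ((x + z - (S - x - y - z)) + (y + z - (S - x - y - z))
                + (x + z - (S - x - y - z)) ^ 2 - (y + z - (S - x - y - z)) ^ 2)) * 216) :=
            Finset.sum_mul _ _ _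
        _ = ∑ x ∈ Finset.Icc b a,
              (6 * (6 * N * (3 * x ^ 2 + 3 * x - 2 * S - 2 * S * x) + 12 * N * (d + e)
                  + 12 * N * (d + e) * x) * K
                + 3 * (6 * N * (3 + 2 * S) - 12 * N * (d + e)) * (b + c) * K
                + (-18 * N) * Qy) * 6 :=
            Finset.sum_congr rfl fun x _ => hper x
        _ = (∑ x ∈ Finset.Icc b a,
              ((6 * K * (-12 * N * S + 12 * N * (d + e))
                + 3 * (b + c) * K * (6 * N * (3 + 2 * S) - 12 * N * (d + e))
                + (-18 * N) * Qy)
              + (6 * K * (18 * N - 12 * N * S + 12 * N * (d + e))) * x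
              + (108 * K * N) * x ^ 2)) * 6 := by
            rw [← Finset.sum_mul]
            exact congrArg (· * 6) (Finset.sum_congr rfl fun x _ => by ring)
        _ = 0 := by rw [hx, hS, hN, hK, hQy]; ring
    have := mul_eq_zero.mp h216
    omega
  refine ⟨key, fun v hv => ?_⟩
  rw [Ifun_eq]
  refine Submodule.span_induction ?_ (map_zero ILin)
    (fun x y _ _ hx hy => by rw [map_add, hx, hy, add_zero])
    (fun n x _ hx => by rw [map_smul, hx, smul_zero]) hv
  rintro x ⟨a, b, c, d, e, hba, hcb, hed, rfl⟩
  rw [← Ifun_eq]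
  exact key a b c d e hba hcb hed
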